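/- The space Ξ is complete for the norm ‖ξ‖_A = sup_x (∑_{p ∈ ℤⁿ} |ξ(x-p)|²)^{1/2}. -/

import Mathlib

open MeasureTheory Filter ComplexConjugate

noncomputable section

/-- The embedding of the integer lattice `ℤⁿ` into `ℝⁿ`. -/
def latt {n : ℕ} (p : Fin n → ℤ) : Fin n → ℝ := fun i => (p i : ℝ)

/-- The periodization of the square modulus of `ξ`. -/
def perSum {n : ℕ} (ξ : (Fin n → ℝ) → ℂ) (x : Fin n → ℝ) : ℝ :=
  ∑' p : Fin n → ℤ, ‖ξ (x - latt p)‖ ^ 2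

/-- Membership in the module `Ξ`: bounded continuous functions whose
periodization of the square modulus is (summable,) uniformly bounded and continuous. -/
def InXi {n : ℕ} (ξ : (Fin n → ℝ) → ℂ) : Prop :=
  Continuous ξ ∧ (∃ M, ∀ x, ‖ξ x‖ ≤ M) ∧
  (∀ x, Summable fun p : Fin n → ℤ => ‖ξ (x - latt p)‖ ^ 2) ∧
  (∃ K, ∀ x, perSum ξ x ≤ K) ∧ Continuous (perSum ξ)

/-- The norm `‖ξ‖_A = sup_x (∑_{p∈ℤⁿ} |ξ(x-p)|²)^{1/2}`. -/
def normA {n : ℕ} (ξ : (Fin n → ℝ) → ℂ) : ℝ := Real.sqrt (⨆ x, perSum ξ x)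

/-- The `C(𝕋ⁿ)`-valued inner product `⟨ξ,η⟩_A(x) = ∑_{p∈ℤⁿ} conj(ξ(x-p)) η(x-p)`. -/
def innerA {n : ℕ} (ξ η : (Fin n → ℝ) → ℂ) (x : Fin n → ℝ) : ℂ :=
  ∑' p : Fin n → ℤ, conj (ξ (x - latt p)) * η (x - latt p)

lemma aux_latt_zero {n : ℕ} (x : Fin n → ℝ) : x - latt (0 : Fin n → ℤ) = x := by
  funext i; simp [latt]

lemma aux_sq (a b c : ℂ) (h : a = b - c) : ‖a‖^2 ≤ 2*‖b‖^2 + 2*‖c‖^2 := by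
  have h1 : ‖a‖ ≤ ‖b‖ + ‖c‖ := h ▸ norm_sub_le b c
  nlinarith [norm_nonneg a, norm_nonneg b, norm_nonneg c, sq_nonneg (‖b‖ - ‖c‖)]

lemma aux_sq_est (δ s t d : ℝ) (hδ : 0 < δ) (hs : 0 ≤ s) (ht : 0 ≤ t)
    (hd : |s - t| ≤ d) : |s^2 - t^2| ≤ 2*δ*(s^2+t^2) + (1/(4*δ))*d^2 := by
  have h1 : |s^2 - t^2| = (s+t)*|s-t| := by
    rw [show s^2 - t^2 = (s+t)*(s-t) by ring, abs_mul, abs_of_nonneg (by linarith)]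
  have h2 : (s+t)*|s-t| ≤ (s+t)*d := by
    apply mul_le_mul_of_nonneg_left hd (by linarith)
  have h3 : (s+t)*d ≤ 2*δ*(s^2+t^2) + (1/(4*δ))*d^2 := by
    have h4 : 0 < 4*δ := by linarith
    rw [div_mul_eq_mul_div, one_mul, ← sub_le_iff_le_add', le_div_iff₀ h4]
    nlinarith [sq_nonneg (2*δ*(s+t) - d), mul_nonneg (mul_nonneg hδ.le hδ.le) (sq_nonneg (s-t))]
  linarith

lemma perSum_sub_comm {n : ℕ} (g h : (Fin n → ℝ) → ℂ) : perSum (g - h) = perSum (h - g) := by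
  funext x; unfold perSum; congr 1; funext p; simp [norm_sub_rev]

lemma sumfun_sub_comm {n : ℕ} (g h : (Fin n → ℝ) → ℂ) (x : Fin n → ℝ) :
    (fun p : Fin n → ℤ => ‖(g - h) (x - latt p)‖^2) = (fun p => ‖(h - g) (x - latt p)‖^2) := by
  funext p; simp [norm_sub_rev]

/-- The space Ξ is complete for the norm ‖·‖_A: every Cauchy sequence in Ξ
converges in the ‖·‖_A norm to an element of Ξ. -/
theorem stmt3 {n : ℕ} (f : ℕ → (Fin n → ℝ) → ℂ) (hf : ∀ k, InXi (f k))
    (hcau : ∀ ε > 0, ∃ N, ∀ j ≥ N, ∀ k ≥ N, normA (f j - f k) < ε) :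
    ∃ ξ, InXi ξ ∧ Tendsto (fun k => normA (f k - ξ)) atTop (nhds 0) := by
  classical
  have hpos : ∀ (g : (Fin n → ℝ) → ℂ) x, 0 ≤ perSum g x :=
    fun g x => tsum_nonneg (fun p => sq_nonneg _)
  have hc : ∀ k, Continuous (f k) := fun k => (hf k).1
  have hMb : ∀ k, ∃ M, ∀ x, ‖f k x‖ ≤ M := fun k => (hf k).2.1
  have hsum : ∀ k x, Summable fun p : Fin n → ℤ => ‖f k (x - latt p)‖^2 :=
    fun k x => (hf k).2.2.1 x
  have hK : ∀ k, ∃ K, ∀ x, perSum (f k) x ≤ K := fun k => (hf k).2.2.2.1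
  have hpc : ∀ k, Continuous (perSum (f k)) := fun k => (hf k).2.2.2.2
  -- quadratic estimate for differences
  have hdiff : ∀ (g h : (Fin n → ℝ) → ℂ),
      (∀ x, Summable fun p : Fin n → ℤ => ‖g (x - latt p)‖^2) →
      (∀ x, Summable fun p : Fin n → ℤ => ‖h (x - latt p)‖^2) → ∀ x,
      Summable (fun p : Fin n → ℤ => ‖(g - h) (x - latt p)‖^2) ∧
      perSum (g - h) x ≤ 2 * perSum g x + 2 * perSum h x := by
    intro g h hg hh x
    have hmaj : Summable (fun p : Fin n → ℤ =>
        2*‖g (x - latt p)‖^2 + 2*‖h (x - latt p)‖^2) :=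
      ((hg x).mul_left 2).add ((hh x).mul_left 2)
    have hle : ∀ p : Fin n → ℤ, ‖(g - h) (x - latt p)‖^2 ≤
        2*‖g (x - latt p)‖^2 + 2*‖h (x - latt p)‖^2 :=
      fun p => aux_sq _ _ _ (by simp)
    have hs : Summable (fun p : Fin n → ℤ => ‖(g - h) (x - latt p)‖^2) :=
      Summable.of_nonneg_of_le (fun p => sq_nonneg _) hle hmaj
    refine ⟨hs, ?_⟩
    have h1 : perSum (g - h) x ≤ ∑' p : Fin n → ℤ,
        (2*‖g (x - latt p)‖^2 + 2*‖h (x - latt p)‖^2) := Summable.tsum_le_tsum hle hs hmaj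
    have h2 : ∑' p : Fin n → ℤ, (2*‖g (x - latt p)‖^2 + 2*‖h (x - latt p)‖^2)
        = 2 * perSum g x + 2 * perSum h x := by
      rw [Summable.tsum_add ((hg x).mul_left 2) ((hh x).mul_left 2), tsum_mul_left, tsum_mul_left]
      rfl
    linarith
  have hBdd : ∀ j k, BddAbove (Set.range (perSum (f j - f k))) := by
    intro j k
    obtain ⟨Kj, hKj⟩ := hK j; obtain ⟨Kk, hKk⟩ := hK k
    refine ⟨2*Kj + 2*Kk, ?_⟩
    rintro y ⟨x, rfl⟩
    have := (hdiff _ _ (hsum j) (hsum k) x).2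
    have := hKj x; have := hKk x; linarith
  have hiSup_nonneg : ∀ j k, 0 ≤ ⨆ x, perSum (f j - f k) x :=
    fun j k => le_trans (hpos _ 0) (le_ciSup (hBdd j k) 0)
  have hle_normA : ∀ j k x, perSum (f j - f k) x ≤ (normA (f j - f k))^2 := by
    intro j k x
    have h1 : (normA (f j - f k))^2 = ⨆ x, perSum (f j - f k) x :=
      Real.sq_sqrt (hiSup_nonneg j k)
    rw [h1]; exact le_ciSup (hBdd j k) x
  have hterm : ∀ (g : (Fin n → ℝ) → ℂ) x,
      Summable (fun p : Fin n → ℤ => ‖g (x - latt p)‖^2) → ‖g x‖^2 ≤ perSum g x := by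
    intro g x hs
    have := Summable.le_tsum hs (0 : Fin n → ℤ) (fun p _ => sq_nonneg _)
    simpa [aux_latt_zero, perSum] using this
  have hnA : ∀ g : (Fin n → ℝ) → ℂ, 0 ≤ normA g := fun g => Real.sqrt_nonneg _
  -- construct the uniform limit as a bounded continuous function
  set F : ℕ → BoundedContinuousFunction (Fin n → ℝ) ℂ := fun k =>
    BoundedContinuousFunction.ofNormedAddCommGroup (f k) (hc k) (hMb k).choose
      (hMb k).choose_spec with hFdef
  have hFcoe : ∀ k, ⇑(F k) = f k := fun k => rfl
  have hFcau : CauchySeq F := by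
    rw [Metric.cauchySeq_iff]
    intro ε hε
    obtain ⟨N, hN⟩ := hcau (ε/2) (by linarith)
    refine ⟨N, fun j hj k hk => ?_⟩
    have h2 : dist (F j) (F k) ≤ ε/2 := by
      rw [BoundedContinuousFunction.dist_le (by linarith)]
      intro x
      have h1 : ‖(f j - f k) x‖^2 ≤ (normA (f j - f k))^2 :=
        le_trans (hterm _ x (hdiff _ _ (hsum j) (hsum k) x).1) (hle_normA j k x)
      have h3 : ‖(f j - f k) x‖ ≤ normA (f j - f k) := by
        calc ‖(f j - f k) x‖ = Real.sqrt (‖(f j - f k) x‖^2) :=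
              (Real.sqrt_sq (norm_nonneg _)).symm
          _ ≤ Real.sqrt ((normA (f j - f k))^2) := Real.sqrt_le_sqrt h1
          _ = normA (f j - f k) := Real.sqrt_sq (hnA _)
      have h4 := lt_of_le_of_lt h3 (hN j hj k hk)
      calc dist (F j x) (F k x) = ‖(f j - f k) x‖ := by
            rw [dist_eq_norm]; simp [hFcoe]
        _ ≤ ε/2 := h4.le
    linarith
  obtain ⟨Ξf, hΞf⟩ := cauchySeq_tendsto_of_complete hFcau
  set ξ : (Fin n → ℝ) → ℂ := ⇑Ξf with hξdef
  have hunif : TendstoUniformly (fun k => ⇑(F k)) ξ atTop :=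
    BoundedContinuousFunction.tendsto_iff_tendstoUniformly.mp hΞf
  have hpt : ∀ y, Tendsto (fun k => f k y) atTop (nhds (ξ y)) := by
    intro y
    have := hunif.tendsto_at y
    simpa [hFcoe] using this
  -- key quantitative estimate
  have key : ∀ ε > 0, ∃ N, ∀ k ≥ N, ∀ x,
      Summable (fun p : Fin n → ℤ => ‖(f k - ξ) (x - latt p)‖^2) ∧
      perSum (f k - ξ) x ≤ ε^2 := by
    intro ε hε
    obtain ⟨N, hN⟩ := hcau ε hε
    refine ⟨N, fun k hk x => ?_⟩
    have hfin : ∀ u : Finset (Fin n → ℤ),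
        ∑ p ∈ u, ‖(f k - ξ) (x - latt p)‖^2 ≤ ε^2 := by
      intro u
      have htend : Tendsto (fun j => ∑ p ∈ u, ‖(f k - f j) (x - latt p)‖^2) atTop
          (nhds (∑ p ∈ u, ‖(f k - ξ) (x - latt p)‖^2)) := by
        apply tendsto_finset_sum
        intro p _
        have h1 : Tendsto (fun j => f j (x - latt p)) atTop (nhds (ξ (x - latt p))) :=
          hpt _
        have h2 : Tendsto (fun j => ‖f k (x - latt p) - f j (x - latt p)‖^2) atTop
            (nhds (‖f k (x - latt p) - ξ (x - latt p)‖^2)) :=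
          (Tendsto.norm (tendsto_const_nhds.sub h1)).pow 2
        simpa using h2
      refine le_of_tendsto htend ?_
      filter_upwards [eventually_ge_atTop N] with j hj
      have h1 : ∑ p ∈ u, ‖(f k - f j) (x - latt p)‖^2 ≤ perSum (f k - f j) x :=
        Summable.sum_le_tsum u (fun p _ => sq_nonneg _) (hdiff _ _ (hsum k) (hsum j) x).1
      have h2 := hle_normA k j x
      have h3 : (normA (f k - f j))^2 ≤ ε^2 := by
        have h5 := hN k hk j hj
        nlinarith [hnA (f k - f j)]
      linarith
    have hsum' : Summable (fun p : Fin n → ℤ => ‖(f k - ξ) (x - latt p)‖^2) :=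
      summable_of_sum_le (fun p => sq_nonneg _) hfin
    exact ⟨hsum', Summable.tsum_le_of_sum_le hsum' hfin⟩
  -- membership facts
  have hξc : Continuous ξ := Ξf.continuous
  have hξb : ∃ M, ∀ x, ‖ξ x‖ ≤ M := ⟨‖Ξf‖, fun x => Ξf.norm_coe_le_norm x⟩
  obtain ⟨N₁, hN₁⟩ := key 1 one_pos
  have hfun : f N₁ - (f N₁ - ξ) = ξ := sub_sub_cancel _ _
  have hξsum : ∀ x, Summable (fun p : Fin n → ℤ => ‖ξ (x - latt p)‖^2) := by
    intro x
    have h := hdiff (f N₁) (f N₁ - ξ) (hsum N₁) (fun y => (hN₁ N₁ le_rfl y).1) x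
    rw [hfun] at h
    exact h.1
  obtain ⟨K1, hK1⟩ := hK N₁
  have hK1nn : 0 ≤ K1 := le_trans (hpos (f N₁) 0) (hK1 0)
  have hξK : ∀ x, perSum ξ x ≤ 2*K1 + 2 := by
    intro x
    have h := hdiff (f N₁) (f N₁ - ξ) (hsum N₁) (fun y => (hN₁ N₁ le_rfl y).1) x
    rw [hfun] at h
    have h2 := (hN₁ N₁ le_rfl x).2
    have h3 := hK1 x
    have h4 : perSum (f N₁ - ξ) x ≤ 1 := by simpa using h2
    linarith [h.2]
  -- uniform bound K for perSum of ξ and of f k (k ≥ N₁)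
  set K : ℝ := 2*(2*K1+2) + 3 with hKdef
  have hKξ : ∀ x, perSum ξ x ≤ K := by
    intro x; have := hξK x
    have h0 := hpos ξ x
    simp only [hKdef]; linarith
  have hKpos : 0 < K := by rw [hKdef]; linarith
  have hKf : ∀ k ≥ N₁, ∀ x, perSum (f k) x ≤ K := by
    intro k hk x
    have hsub : ∀ y, Summable (fun p : Fin n → ℤ => ‖(ξ - f k) (y - latt p)‖^2) := by
      intro y; rw [sumfun_sub_comm]; exact (hN₁ k hk y).1
    have h := hdiff ξ (ξ - f k) hξsum hsub x
    rw [sub_sub_cancel] at h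
    have h2 : perSum (ξ - f k) x ≤ 1 := by
      rw [perSum_sub_comm]; simpa using (hN₁ k hk x).2
    have h3 := hξK x
    simp only [hKdef]; linarith [h.2]
  clear_value K
  -- continuity of perSum ξ via uniform convergence
  have hpscont : Continuous (perSum ξ) := by
    have huni : TendstoUniformly (fun k => perSum (f k)) (perSum ξ) atTop := by
      rw [Metric.tendstoUniformly_iff]
      intro ε hε
      set δ : ℝ := ε / (8*K) with hδdef
      have hδ : 0 < δ := div_pos hε (by positivity)
      have hδε : 0 < δ * ε := mul_pos hδ hε
      have h6 : 2*δ*(K+K) = ε/2 := by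
        rw [hδdef]; field_simp; ring
      have h7 : (1/(4*δ))*(δ*ε) = ε/4 := by
        field_simp
      clear_value δ
      obtain ⟨N₂, hN₂⟩ := key (Real.sqrt (δ*ε)) (Real.sqrt_pos.mpr hδε)
      filter_upwards [eventually_ge_atTop (max N₁ N₂)] with k hk
      intro x
      have hk1 : k ≥ N₁ := le_trans (le_max_left _ _) hk
      have hk2 : k ≥ N₂ := le_trans (le_max_right _ _) hk
      have hkey := hN₂ k hk2 x
      have hkey2 : perSum (f k - ξ) x ≤ δ * ε := by
        have := hkey.2
        rwa [Real.sq_sqrt hδε.le] at this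
      have hsξ := hξsum x
      have hsk := hsum k x
      have hskξ := hkey.1
      -- pointwise majorant
      have hmle : ∀ p : Fin n → ℤ,
          |‖ξ (x - latt p)‖^2 - ‖f k (x - latt p)‖^2| ≤
            2*δ*(‖ξ (x - latt p)‖^2 + ‖f k (x - latt p)‖^2) +
              (1/(4*δ))*‖(f k - ξ) (x - latt p)‖^2 := by
        intro p
        apply aux_sq_est δ _ _ _ hδ (norm_nonneg _) (norm_nonneg _)
        have := abs_norm_sub_norm_le (ξ (x - latt p)) (f k (x - latt p))
        calc |‖ξ (x - latt p)‖ - ‖f k (x - latt p)‖| ≤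
              ‖ξ (x - latt p) - f k (x - latt p)‖ := this
          _ = ‖(f k - ξ) (x - latt p)‖ := by rw [norm_sub_rev]; simp
      have hm : Summable (fun p : Fin n → ℤ =>
          2*δ*(‖ξ (x - latt p)‖^2 + ‖f k (x - latt p)‖^2) +
            (1/(4*δ))*‖(f k - ξ) (x - latt p)‖^2) :=
        ((hsξ.add hsk).mul_left (2*δ)).add (hskξ.mul_left (1/(4*δ)))
      have habs_sum : Summable (fun p : Fin n → ℤ =>
          |‖ξ (x - latt p)‖^2 - ‖f k (x - latt p)‖^2|) :=
        Summable.of_nonneg_of_le (fun p => abs_nonneg _) hmle hm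
      have h1 : |perSum ξ x - perSum (f k) x| ≤
          ∑' p : Fin n → ℤ, |‖ξ (x - latt p)‖^2 - ‖f k (x - latt p)‖^2| := by
        have hts : perSum ξ x - perSum (f k) x =
            ∑' p : Fin n → ℤ, (‖ξ (x - latt p)‖^2 - ‖f k (x - latt p)‖^2) :=
          (Summable.tsum_sub hsξ hsk).symm
        rw [hts]
        have := norm_tsum_le_tsum_norm (f := fun p : Fin n → ℤ =>
          ‖ξ (x - latt p)‖^2 - ‖f k (x - latt p)‖^2)
          (by simpa [Real.norm_eq_abs] using habs_sum)
        simpa [Real.norm_eq_abs] using this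
      have h2 : ∑' p : Fin n → ℤ, |‖ξ (x - latt p)‖^2 - ‖f k (x - latt p)‖^2| ≤
          ∑' p : Fin n → ℤ, (2*δ*(‖ξ (x - latt p)‖^2 + ‖f k (x - latt p)‖^2) +
            (1/(4*δ))*‖(f k - ξ) (x - latt p)‖^2) := Summable.tsum_le_tsum hmle habs_sum hm
      have h3 : ∑' p : Fin n → ℤ, (2*δ*(‖ξ (x - latt p)‖^2 + ‖f k (x - latt p)‖^2) +
            (1/(4*δ))*‖(f k - ξ) (x - latt p)‖^2) =
          2*δ*(perSum ξ x + perSum (f k) x) + (1/(4*δ))*perSum (f k - ξ) x := by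
        rw [Summable.tsum_add ((hsξ.add hsk).mul_left (2*δ)) (hskξ.mul_left (1/(4*δ))),
          tsum_mul_left, tsum_mul_left, Summable.tsum_add hsξ hsk]
        rfl
      have h4 : 2*δ*(perSum ξ x + perSum (f k) x) ≤ 2*δ*(K + K) := by
        apply mul_le_mul_of_nonneg_left _ (by linarith)
        have := hKξ x; have := hKf k hk1 x; linarith
      have h5 : (1/(4*δ))*perSum (f k - ξ) x ≤ (1/(4*δ))*(δ*ε) := by
        apply mul_le_mul_of_nonneg_left hkey2 (by positivity)
      rw [Real.dist_eq]
      calc |perSum ξ x - perSum (f k) x| ≤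
            2*δ*(perSum ξ x + perSum (f k) x) + (1/(4*δ))*perSum (f k - ξ) x := by
            rw [← h3]; linarith
        _ ≤ ε/2 + ε/4 := by rw [← h6, ← h7]; linarith
        _ < ε := by linarith
    exact huni.continuous (Eventually.of_forall hpc).frequently
  refine ⟨ξ, ⟨hξc, hξb, hξsum, ⟨K, hKξ⟩, hpscont⟩, ?_⟩
  rw [Metric.tendsto_atTop]
  intro ε hε
  obtain ⟨N, hN⟩ := key (ε/2) (by linarith)
  refine ⟨N, fun k hk => ?_⟩
  rw [Real.dist_eq, sub_zero, abs_of_nonneg (hnA _)]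
  have h1 : (⨆ x, perSum (f k - ξ) x) ≤ (ε/2)^2 := ciSup_le (fun x => (hN k hk x).2)
  calc normA (f k - ξ) = Real.sqrt (⨆ x, perSum (f k - ξ) x) := rfl
    _ ≤ Real.sqrt ((ε/2)^2) := Real.sqrt_le_sqrt h1
    _ = ε/2 := Real.sqrt_sq (by linarith)
    _ < ε := by linarith
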